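/- In the CMBS setting, let S be a CMBS at x₀, T ⊆ S, U ⊆ {1,…,n} with U ∩ S = ∅, and v : X → ℝ^n a function continuous at x₀. If x ↦ P_T(x)v(x) is NOT continuous at x₀, then x ↦ (P_T(x) + P_U(x))v(x) is not continuous at x₀. -/
import Mathlib


open Matrix

/-- `P_S(x) = ∑_{i ∈ S} ĵ_i(x) ĵ_i(x)ᵀ`, the projector-valued function
associated with a subset `S` of the pointwise orthonormal frame `ĵ`. -/
def projSum {X : Type*} {n : ℕ} (j : Fin n → X → (Fin n → ℝ))
    (S : Finset (Fin n)) (x : X) : Matrix (Fin n) (Fin n) ℝ :=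
  ∑ i ∈ S, vecMulVec (j i x) (j i x)

/-- `S` is a continuous minimum basis subset (CMBS) at `x₀`: `S` is nonempty, `P_S` is
continuous at `x₀`, and no nonempty proper subset `T ⊊ S` has `P_T` continuous at `x₀`. -/
def IsCMBS {X : Type*} [TopologicalSpace X] {n : ℕ}
    (j : Fin n → X → (Fin n → ℝ)) (x₀ : X) (S : Finset (Fin n)) : Prop :=
  S.Nonempty ∧ ContinuousAt (projSum j S) x₀ ∧
    ∀ T : Finset (Fin n), T.Nonempty → T ⊂ S → ¬ ContinuousAt (projSum j T) x₀

private lemma vecMulVec_mulVec' {n : ℕ} (a b w : Fin n → ℝ) :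
    (vecMulVec a b).mulVec w = (b ⬝ᵥ w) • a := by
  ext i
  simp only [vecMulVec, mulVec, dotProduct, Pi.smul_apply, smul_eq_mul,
    Matrix.of_apply, Finset.sum_mul]
  exact Finset.sum_congr rfl fun k _ => by ring

private lemma projSum_mulVec {X : Type*} {n : ℕ} (j : Fin n → X → (Fin n → ℝ))
    (S : Finset (Fin n)) (x : X) (w : Fin n → ℝ) :
    (projSum j S x).mulVec w = ∑ i ∈ S, (j i x ⬝ᵥ w) • j i x := by
  ext i
  simp only [projSum, mulVec, dotProduct, Finset.sum_apply, Matrix.sum_apply,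
    vecMulVec, Matrix.of_apply, Finset.sum_mul, Pi.smul_apply, smul_eq_mul]
  rw [Finset.sum_comm]
  exact Finset.sum_congr rfl fun l _ => Finset.sum_congr rfl fun k _ => by ring

private lemma proj_proj {X : Type*} {n : ℕ} (j : Fin n → X → (Fin n → ℝ))
    (horth : ∀ x, ∀ i k : Fin n, j i x ⬝ᵥ j k x = if i = k then 1 else 0)
    (S T : Finset (Fin n)) (x : X) (w : Fin n → ℝ) :
    (projSum j S x).mulVec ((projSum j T x).mulVec w)
      = (projSum j (S ∩ T) x).mulVec w := by
  rw [projSum_mulVec, projSum_mulVec, projSum_mulVec]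
  have : ∀ i ∈ S, (j i x ⬝ᵥ ∑ k ∈ T, (j k x ⬝ᵥ w) • j k x) • j i x
      = if i ∈ T then (j i x ⬝ᵥ w) • j i x else 0 := by
    intro i _
    have : j i x ⬝ᵥ ∑ k ∈ T, (j k x ⬝ᵥ w) • j k x
        = if i ∈ T then j i x ⬝ᵥ w else 0 := by
      have hds : j i x ⬝ᵥ ∑ k ∈ T, (j k x ⬝ᵥ w) • j k x
          = ∑ k ∈ T, j i x ⬝ᵥ ((j k x ⬝ᵥ w) • j k x) := by
        simp only [dotProduct, Finset.sum_apply, Pi.smul_apply, smul_eq_mul,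
          Finset.mul_sum]
        exact Finset.sum_comm
      rw [hds]
      have h2 : ∀ k ∈ T, j i x ⬝ᵥ (j k x ⬝ᵥ w) • j k x
          = if i = k then j i x ⬝ᵥ w else 0 := by
        intro k _
        rw [dotProduct_smul, smul_eq_mul, horth]
        split <;> simp_all [mul_comm]
      rw [Finset.sum_congr rfl h2, Finset.sum_ite_eq]
    rw [this]
    split <;> simp
  rw [Finset.sum_congr rfl this, Finset.sum_ite_mem]

private lemma continuousAt_mulVec' {X : Type*} [TopologicalSpace X] {n : ℕ}
    {A : X → Matrix (Fin n) (Fin n) ℝ} {w : X → Fin n → ℝ} {x₀ : X}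
    (hA : ContinuousAt A x₀) (hw : ContinuousAt w x₀) :
    ContinuousAt (fun x => (A x).mulVec (w x)) x₀ := by
  apply continuousAt_pi.2
  intro i
  simp only [mulVec, dotProduct]
  exact tendsto_finset_sum _ fun k _ =>
    (((continuous_apply k).continuousAt.comp
      ((continuous_apply i).continuousAt.comp hA)).mul
      ((continuous_apply k).continuousAt.comp hw))

/-- If `S` is a CMBS at `x₀`, `T ⊆ S`, `U` is disjoint from `S`, `v` is continuous at
`x₀`, and `P_T v` is not continuous at `x₀`, then `(P_T + P_U) v` is not continuous
at `x₀`. -/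
theorem cmbs_not_continuousAt_add
    {X : Type*} [NormedAddCommGroup X] [NormedSpace ℝ X]
    {n : ℕ} (j : Fin n → X → (Fin n → ℝ)) (x₀ : X)
    (horth : ∀ x, ∀ i k : Fin n, j i x ⬝ᵥ j k x = if i = k then 1 else 0)
    (S : Finset (Fin n)) (hS : IsCMBS j x₀ S)
    (T : Finset (Fin n)) (hTS : T ⊆ S)
    (U : Finset (Fin n)) (hUS : U ∩ S = ∅)
    (v : X → (Fin n → ℝ)) (hv : ContinuousAt v x₀)
    (hnot : ¬ ContinuousAt (fun x => (projSum j T x).mulVec (v x)) x₀) :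
    ¬ ContinuousAt (fun x => (projSum j T x + projSum j U x).mulVec (v x)) x₀ := by
  intro hcont
  apply hnot
  have key : ∀ x, (projSum j T x).mulVec (v x)
      = (projSum j S x).mulVec ((projSum j T x + projSum j U x).mulVec (v x)) := by
    intro x
    rw [Matrix.add_mulVec, Matrix.mulVec_add, proj_proj j horth S T,
      proj_proj j horth S U, Finset.inter_eq_right.mpr hTS,
      Finset.inter_comm S U, hUS]
    simp [projSum]
  have : ContinuousAt (fun x =>
      (projSum j S x).mulVec ((projSum j T x + projSum j U x).mulVec (v x))) x₀ :=
    continuousAt_mulVec' hS.2.1 hcont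
  exact this.congr (Filter.Eventually.of_forall fun x => (key x).symm)
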